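/- If U is uniformly distributed on [0,1], K > 0, and s ∈ ℝ, then E[exp(-2Ks²U(1-U))] ≤ (1 - exp(-Ks²/2))/(Ks²/2). -/

import Mathlib

open MeasureTheory

lemma int_exp_lin (m b x y : ℝ) (hm : m ≠ 0) :
    ∫ u in x..y, Real.exp (m * u + b)
      = (Real.exp (m * y + b) - Real.exp (m * x + b)) / m := by
  have h : ∀ u ∈ Set.uIcc x y,
      HasDerivAt (fun t => Real.exp (m * t + b) / m) (Real.exp (m * u + b)) u := by
    intro u _
    have h1 : HasDerivAt (fun t : ℝ => m * t + b) m u := by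
      simpa using ((hasDerivAt_id u).const_mul m).add_const b
    have h2 := (h1.exp).div_const m
    convert h2 using 1
    · rfl
    · rfl
    · field_simp
  rw [intervalIntegral.integral_eq_sub_of_hasDerivAt h
      ((Real.continuous_exp.comp (by continuity)).intervalIntegrable x y)]
  ring

theorem fill_janson_laplace_bound (K s : ℝ) (hK : 0 < K) (hs : s ≠ 0) :
    ∫ u in Set.Icc (0 : ℝ) 1, Real.exp (-2 * K * s ^ 2 * (u * (1 - u)))
      ≤ (1 - Real.exp (-(K * s ^ 2 / 2))) / (K * s ^ 2 / 2) := by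
  have ha : 0 < K * s ^ 2 := by positivity
  have hcont : Continuous fun u : ℝ => Real.exp (-2 * K * s ^ 2 * (u * (1 - u))) := by
    continuity
  rw [MeasureTheory.integral_Icc_eq_integral_Ioc,
    ← intervalIntegral.integral_of_le (by norm_num : (0:ℝ) ≤ 1)]
  rw [← intervalIntegral.integral_add_adjacent_intervals
      (hcont.intervalIntegrable 0 (1/2)) (hcont.intervalIntegrable (1/2) 1)]
  have hb1 : ∫ u in (0:ℝ)..(1/2), Real.exp (-2 * K * s ^ 2 * (u * (1 - u)))
      ≤ ∫ u in (0:ℝ)..(1/2), Real.exp ((-(K * s ^ 2)) * u + 0) := by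
    apply intervalIntegral.integral_mono_on (by norm_num)
      (hcont.intervalIntegrable 0 (1/2))
      ((Real.continuous_exp.comp (by continuity)).intervalIntegrable 0 (1/2))
    intro u hu
    have h0 : 0 ≤ u := hu.1
    have h1 : u ≤ 1/2 := hu.2
    show Real.exp (-2 * K * s ^ 2 * (u * (1 - u))) ≤ Real.exp (-(K * s ^ 2) * u + 0)
    apply Real.exp_le_exp.2
    nlinarith [mul_nonneg (mul_nonneg ha.le h0) (show (0:ℝ) ≤ 1 - 2*u by linarith)]
  have hb2 : ∫ u in (1/2:ℝ)..1, Real.exp (-2 * K * s ^ 2 * (u * (1 - u)))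
      ≤ ∫ u in (1/2:ℝ)..1, Real.exp ((K * s ^ 2) * u + (-(K * s ^ 2))) := by
    apply intervalIntegral.integral_mono_on (by norm_num)
      (hcont.intervalIntegrable (1/2) 1)
      ((Real.continuous_exp.comp (by continuity)).intervalIntegrable (1/2) 1)
    intro u hu
    have h0 : 1/2 ≤ u := hu.1
    have h1 : u ≤ 1 := hu.2
    show Real.exp (-2 * K * s ^ 2 * (u * (1 - u))) ≤ Real.exp (K * s ^ 2 * u + -(K * s ^ 2))
    apply Real.exp_le_exp.2
    nlinarith [mul_nonneg (mul_nonneg ha.le (show (0:ℝ) ≤ 1 - u by linarith))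
      (show (0:ℝ) ≤ 2*u - 1 by linarith)]
  have e1 := int_exp_lin (-(K * s ^ 2)) 0 0 (1/2) (by linarith)
  have e2 := int_exp_lin (K * s ^ 2) (-(K * s ^ 2)) (1/2) 1 ha.ne'
  rw [e1] at hb1
  rw [e2] at hb2
  refine (add_le_add hb1 hb2).trans (le_of_eq ?_)
  have alg : ∀ c E : ℝ, c ≠ 0 →
      (Real.exp (-(c/2)) - 1) / (-c) + (1 - Real.exp (-(c/2))) / c
        = (1 - Real.exp (-(c/2))) / (c/2) := by
    intro c E hc
    rw [div_neg, ← neg_div, neg_sub, ← add_div]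
    rw [eq_div_iff (by positivity : c/2 ≠ 0), div_mul_eq_mul_div,
      div_eq_iff hc]
    ring
  have h2 : K * s ^ 2 * (1/2) + -(K * s ^ 2) = -(K * s ^ 2 / 2) := by ring
  have h3 : K * s ^ 2 * 1 + -(K * s ^ 2) = (0:ℝ) := by ring
  have h4 : -(K * s ^ 2) * (1/2) + 0 = -(K * s ^ 2 / 2) := by ring
  have h5 : -(K * s ^ 2) * 0 + 0 = (0:ℝ) := by ring
  rw [h2, h3, h4, h5, Real.exp_zero]
  exact alg (K * s ^ 2) 0 ha.ne'
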